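/- Let k be an algebraically closed field of characteristic p > 0, and let P, Q ∈ k[X] be coprime with 0 ≤ deg Q < deg P < p. Let D(Z) ∈ k[Z] be the discriminant in degree deg P of P(X) - Z·Q(X). Then (P/Q)' can be written as A/(B·Q) with A coprime to Q, A(X) = ∏_{i=1}^d (X - x_i) for d = deg P + rdeg Q - 1 (where rdeg Q is the number of distinct roots of Q), and D(Z) = c·∏_{i=1}^d (Z - P(x_i)/Q(x_i)) for some nonzero constant c. In particular deg D = deg P + rdeg Q - 1. -/

import Mathlib

open Polynomial
open scoped Classical

private lemma aux_card_roots {k : Type*} [Field k] [IsAlgClosed k] (f : Polynomial k) :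
    Multiset.card f.roots = f.natDegree :=
  splits_iff_card_roots.mp (IsAlgClosed.splits f)

private lemma aux_eval_eq {k : Type*} [Field k] [IsAlgClosed k] (f : Polynomial k)
    (y : k) : f.eval y = f.leadingCoeff * ((f.roots.map fun x => y - x)).prod := by
  conv_lhs => rw [← C_leadingCoeff_mul_prod_multiset_X_sub_C (aux_card_roots f)]
  rw [eval_mul, eval_C, eval_multiset_prod, Multiset.map_map]
  simp [Function.comp]

private lemma aux_key {k : Type*} [Field k] (s : Multiset k) (c : k) (h : k → k) :
    (s.map fun a => c * h a).prod = c ^ Multiset.card s * (s.map h).prod := by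
  rw [Multiset.prod_map_mul]
  congr 1
  simp [Multiset.map_const', Multiset.prod_replicate]

private lemma aux_prod_sub {k : Type*} [Field k] [IsAlgClosed k] (f : Polynomial k) (x : k) :
    f.leadingCoeff * (f.roots.map fun y => y - x).prod
      = (-1) ^ f.natDegree * f.eval x := by
  rw [aux_eval_eq f x]
  have h : (f.roots.map fun y => y - x) = (f.roots.map fun y => x - y).map Neg.neg := by
    rw [Multiset.map_map]; exact Multiset.map_congr rfl fun y _ => by simp
  rw [h, Multiset.prod_map_neg, Multiset.card_map, aux_card_roots]
  ring

private lemma aux_prod_eval {k : Type*} [Field k] [IsAlgClosed k] (f g : Polynomial k) :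
    (f.roots.map fun y => g.eval y).prod * f.leadingCoeff ^ g.natDegree
      = (-1) ^ (f.natDegree * g.natDegree) * g.leadingCoeff ^ f.natDegree
        * (g.roots.map fun x => f.eval x).prod := by
  calc (f.roots.map fun y => g.eval y).prod * f.leadingCoeff ^ g.natDegree
      = (f.roots.map fun y => g.leadingCoeff * ((g.roots.map fun x => y - x)).prod).prod
          * f.leadingCoeff ^ g.natDegree := by
        rw [Multiset.map_congr rfl fun y _ => aux_eval_eq g y]
    _ = g.leadingCoeff ^ f.natDegree
          * (f.roots.map fun y => ((g.roots.map fun x => y - x)).prod).prod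
          * f.leadingCoeff ^ g.natDegree := by
        rw [aux_key, aux_card_roots]
    _ = g.leadingCoeff ^ f.natDegree
          * (g.roots.map fun x => ((f.roots.map fun y => y - x)).prod).prod
          * f.leadingCoeff ^ g.natDegree := by
        rw [Multiset.prod_map_prod_map]
    _ = g.leadingCoeff ^ f.natDegree
          * (g.roots.map fun x => f.leadingCoeff * ((f.roots.map fun y => y - x)).prod).prod := by
        rw [aux_key, aux_card_roots]; ring
    _ = g.leadingCoeff ^ f.natDegree
          * (g.roots.map fun x => (-1) ^ f.natDegree * f.eval x).prod := by
        rw [Multiset.map_congr rfl fun x _ => aux_prod_sub f x]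
    _ = _ := by rw [aux_key, aux_card_roots]; ring

theorem derivative_quotient_discriminant
    {k : Type*} [Field k] [IsAlgClosed k] (p : ℕ) [Fact p.Prime] [CharP k p]
    (P Q : Polynomial k) (hcop : IsCoprime P Q) (hQ : Q ≠ 0)
    (hdeg : Q.natDegree < P.natDegree) (hp : P.natDegree < p) :
    ∃ (A B : Polynomial k)
      (x : Fin (P.natDegree + Q.roots.toFinset.card - 1) → k) (c : k),
      c ≠ 0 ∧ B ≠ 0 ∧ IsCoprime A Q ∧
      A = ∏ i, (Polynomial.X - C (x i)) ∧
      algebraMap (Polynomial k) (RatFunc k) (derivative P * Q - P * derivative Q) /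
          algebraMap (Polynomial k) (RatFunc k) (Q ^ 2)
        = algebraMap (Polynomial k) (RatFunc k) A /
            algebraMap (Polynomial k) (RatFunc k) (B * Q) ∧
      (∀ z : k,
        ((P - C z * Q).roots.map
            (fun y => (derivative P - C z * derivative Q).eval y)).prod
          = c * ∏ i, (z - P.eval (x i) / Q.eval (x i))) ∧
      (C c * ∏ i, (Polynomial.X - C (P.eval (x i) / Q.eval (x i)))).natDegree
        = P.natDegree + Q.roots.toFinset.card - 1 := by
  classical
  set n := P.natDegree with hn
  set m := Q.natDegree with hm
  set r := Q.roots.toFinset.card with hr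
  have hP0 : P ≠ 0 := fun h => by simp [h, hn] at hdeg
  have hn1 : 0 < n := lt_of_le_of_lt (Nat.zero_le m) hdeg
  have hpc : P.leadingCoeff ≠ 0 := leadingCoeff_ne_zero.mpr hP0
  have hqc : Q.leadingCoeff ≠ 0 := leadingCoeff_ne_zero.mpr hQ
  have hcast : ∀ e : ℕ, 0 < e → e < p → (e : k) ≠ 0 := by
    intro e he hep h0
    rw [CharP.cast_eq_zero_iff k p] at h0
    exact absurd (Nat.le_of_dvd he h0) (not_le.mpr hep)
  have hnocommon : ∀ y : k, Q.eval y = 0 → P.eval y ≠ 0 := by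
    intro y hQy hPy
    obtain ⟨u, v, huv⟩ := hcop
    have h := congrArg (Polynomial.eval y) huv
    simp [hQy, hPy] at h
  set W := derivative P * Q - P * derivative Q with hWdef
  -- degree of W
  have hcoeffW : W.coeff (n + m - 1) = ((n : k) - (m : k)) * (P.leadingCoeff * Q.leadingCoeff) := by
    have h1 : (derivative P * Q).coeff (n + m - 1) = (n : k) * (P.leadingCoeff * Q.leadingCoeff) := by
      have e : n + m - 1 = (n - 1) + m := by omega
      rw [e, coeff_mul_add_eq_of_natDegree_le (natDegree_derivative_le P) le_rfl, coeff_derivative]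
      have e2 : n - 1 + 1 = n := by omega
      have e3 : ((n - 1 : ℕ) : k) + 1 = (n : k) := by
        rw [Nat.cast_sub (by omega : 1 ≤ n)]; push_cast; ring
      rw [e2, e3, coeff_natDegree]
      rw [show Q.coeff m = Q.leadingCoeff from coeff_natDegree]
      ring
    have h2 : (P * derivative Q).coeff (n + m - 1) = P.leadingCoeff * ((m : k) * Q.leadingCoeff) := by
      rcases Nat.eq_zero_or_pos m with h0 | h0
      · have hQC : derivative Q = 0 := by
          rw [Polynomial.eq_C_of_natDegree_eq_zero h0]; simp
        simp [hQC, h0]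
      · have e : n + m - 1 = n + (m - 1) := by omega
        rw [e, coeff_mul_add_eq_of_natDegree_le le_rfl (natDegree_derivative_le Q), coeff_derivative]
        have e2 : m - 1 + 1 = m := by omega
        have e3 : ((m - 1 : ℕ) : k) + 1 = (m : k) := by
          rw [Nat.cast_sub (by omega : 1 ≤ m)]; push_cast; ring
        rw [e2, e3, coeff_natDegree]
        rw [show Q.coeff m = Q.leadingCoeff from coeff_natDegree]
        ring
    rw [hWdef, coeff_sub, h1, h2]
    ring
  have hPQ'le : (P * derivative Q).natDegree ≤ n + m - 1 := by
    rcases Nat.eq_zero_or_pos m with h0 | h0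
    · have hQC : derivative Q = 0 := by
        rw [Polynomial.eq_C_of_natDegree_eq_zero h0]; simp
      simp [hQC]
    · refine le_trans (natDegree_mul_le) ?_
      have := natDegree_derivative_le Q
      omega
  have hWbound : W.natDegree ≤ n + m - 1 := by
    refine le_trans (natDegree_sub_le _ _) (max_le ?_ hPQ'le)
    refine le_trans (natDegree_mul_le) ?_
    have := natDegree_derivative_le P
    omega
  have hnm : ((n : k) - (m : k)) ≠ 0 := by
    rw [← Nat.cast_sub hdeg.le]
    exact hcast _ (by omega) (by omega)
  have hWlcne : W.coeff (n + m - 1) ≠ 0 := by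
    rw [hcoeffW]; exact mul_ne_zero hnm (mul_ne_zero hpc hqc)
  have hW0 : W ≠ 0 := fun h => hWlcne (by simp [h])
  have hWdeg : W.natDegree = n + m - 1 := le_antisymm hWbound (le_natDegree_of_ne_zero hWlcne)
  have hlc : W.leadingCoeff ≠ 0 := leadingCoeff_ne_zero.mpr hW0
  have hQcard : Multiset.card Q.roots = m := aux_card_roots Q
  have hWcard : Multiset.card W.roots = n + m - 1 := by rw [aux_card_roots, hWdeg]
  -- root multiplicities of W at roots of Q
  have hmultW : ∀ y ∈ Q.roots, rootMultiplicity y W = rootMultiplicity y Q - 1 := by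
    intro y hy
    have hQy : Q.eval y = 0 := (mem_roots'.mp hy).2
    set e := rootMultiplicity y Q with he
    have he1 : 0 < e := (rootMultiplicity_pos hQ).mpr (mem_roots'.mp hy).2
    have hem : e ≤ m := by
      rw [he, ← count_roots, ← hQcard]
      exact Multiset.count_le_card y Q.roots
    set u := Q /ₘ (X - C y) ^ e with hu
    have hQu : (X - C y) ^ e * u = Q := pow_mul_divByMonic_rootMultiplicity_eq Q y
    have huy : u.eval y ≠ 0 := eval_divByMonic_pow_rootMultiplicity_ne_zero y hQ
    set V := (X - C y) * (derivative P * u - P * derivative u) - C (e : k) * (P * u) with hV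
    have hQfac : Q = (X - C y) ^ (e - 1) * ((X - C y) * u) := by
      have he2 : e - 1 + 1 = e := by omega
      rw [← hQu, ← mul_assoc, ← pow_succ, he2]
    have hQ' : derivative Q = (X - C y) ^ (e - 1) * (C (e : k) * u + (X - C y) * derivative u) := by
      conv_lhs => rw [← hQu]
      rw [derivative_mul, derivative_pow, derivative_X_sub_C]
      have hpow : (X - C y) ^ e = (X - C y) ^ (e - 1) * (X - C y) := by
        have he2 : e - 1 + 1 = e := by omega
        rw [← pow_succ, he2]
      rw [hpow]
      ring
    have hWfac : W = (X - C y) ^ (e - 1) * V := by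
      rw [hWdef, hQ', hV]
      conv_lhs => rw [hQfac]
      ring
    have hVy : V.eval y ≠ 0 := by
      have hev : V.eval y = -((e : k) * (P.eval y * u.eval y)) := by
        rw [hV]
        simp only [eval_sub, eval_mul, eval_add, eval_C, eval_X, sub_self, zero_mul]
        ring
      rw [hev]
      exact neg_ne_zero.mpr (mul_ne_zero
        (hcast e he1 (lt_of_le_of_lt hem (lt_trans hdeg hp)))
        (mul_ne_zero (hnocommon y hQy) huy))
    have hne : (X - C y) ^ (e - 1) * V ≠ 0 := hWfac ▸ hW0
    rw [hWfac, rootMultiplicity_mul hne, rootMultiplicity_X_sub_C_pow,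
      rootMultiplicity_eq_zero hVy]
    omega
  -- multisets
  set T : Multiset k := Q.roots - Q.roots.dedup with hT
  have hrm : r ≤ m := by
    rw [← hQcard, hr, Multiset.card_toFinset]
    exact Multiset.card_le_card (Multiset.dedup_le _)
  have hTmem : ∀ y ∈ T, y ∈ Q.roots := fun y hy =>
    Multiset.mem_of_le (Multiset.sub_le_self _ _) hy
  have hTcount : ∀ y : k, Multiset.count y T = Multiset.count y Q.roots - 1 := by
    intro y
    rw [hT, Multiset.count_sub, Multiset.count_dedup]
    by_cases hy : y ∈ Q.roots
    · simp [hy]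
    · simp [hy, Multiset.count_eq_zero_of_notMem hy]
  have hTle : T ≤ W.roots := by
    rw [Multiset.le_iff_count]
    intro y
    rw [hTcount]
    by_cases hy : y ∈ Q.roots
    · rw [count_roots Q, count_roots W, hmultW y hy]
    · rw [Multiset.count_eq_zero_of_notMem hy]
      omega
  set S : Multiset k := W.roots - T with hS
  have hST : S + T = W.roots := tsub_add_cancel_of_le hTle
  have hSQ : ∀ y ∈ S, Q.eval y ≠ 0 := by
    intro y hyS hQy
    have hyQ : y ∈ Q.roots := mem_roots'.mpr ⟨hQ, hQy⟩
    have hcnt : Multiset.count y S = 0 := by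
      rw [hS, Multiset.count_sub, hTcount, count_roots, count_roots, hmultW y hyQ]
      omega
    exact (Multiset.count_eq_zero.mp hcnt) hyS
  have hTcard : Multiset.card T = m - r := by
    have h := tsub_add_cancel_of_le (Multiset.dedup_le Q.roots)
    have h2 := congrArg Multiset.card h
    rw [Multiset.card_add, hQcard] at h2
    have h3 : Multiset.card Q.roots.dedup = r := by
      rw [hr, Multiset.card_toFinset]
    rw [hT]
    omega
  have hScard : Multiset.card S = n + r - 1 := by
    have h2 := congrArg Multiset.card hST
    rw [Multiset.card_add, hWcard, hTcard] at h2
    omega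
  -- the polynomials
  set A : Polynomial k := (S.map fun a => X - C a).prod with hA
  set G : Polynomial k := (T.map fun a => X - C a).prod with hG
  set rad : Polynomial k := (Q.roots.dedup.map fun a => X - C a).prod with hrad
  have hAmonic : A.Monic := monic_multiset_prod_of_monic _ _ fun a _ => monic_X_sub_C a
  have hA0 : A ≠ 0 := hAmonic.ne_zero
  have hrad0 : rad ≠ 0 :=
    (monic_multiset_prod_of_monic _ _ fun a _ => monic_X_sub_C a).ne_zero
  have hWfacA : W = C W.leadingCoeff * (A * G) := by
    conv_lhs => rw [← C_leadingCoeff_mul_prod_multiset_X_sub_C (aux_card_roots W)]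
    rw [← hST, Multiset.map_add, Multiset.prod_add, hA, hG]
  have hQfacQ : Q = C Q.leadingCoeff * (G * rad) := by
    conv_lhs => rw [← C_leadingCoeff_mul_prod_multiset_X_sub_C (aux_card_roots Q)]
    have hd : Q.roots = T + Q.roots.dedup :=
      (tsub_add_cancel_of_le (Multiset.dedup_le _)).symm
    rw [hd, Multiset.map_add, Multiset.prod_add, hrad, hG]
  have hAroots : A.roots = S := by rw [hA]; exact roots_multiset_prod_X_sub_C S
  have hAQcop : IsCoprime A Q := by
    rw [← EuclideanDomain.gcd_isUnit_iff]
    by_contra hgu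
    have hdeg0 : (EuclideanDomain.gcd A Q).degree ≠ 0 := fun hd =>
      hgu (isUnit_iff_degree_eq_zero.mpr hd)
    obtain ⟨y, hy⟩ := IsAlgClosed.exists_root _ hdeg0
    have hyA : A.eval y = 0 :=
      eval_eq_zero_of_dvd_of_eval_eq_zero (EuclideanDomain.gcd_dvd_left A Q) hy
    have hyQ : Q.eval y = 0 :=
      eval_eq_zero_of_dvd_of_eval_eq_zero (EuclideanDomain.gcd_dvd_right A Q) hy
    have hymem : y ∈ S := by
      rw [← hAroots]; exact mem_roots'.mpr ⟨hA0, hyA⟩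
    exact hSQ y hymem hyQ
  set B : Polynomial k := C (W.leadingCoeff⁻¹ * Q.leadingCoeff) * rad with hB
  have hB0 : B ≠ 0 :=
    mul_ne_zero (C_ne_zero.mpr (mul_ne_zero (inv_ne_zero hlc) hqc)) hrad0
  have hWB : W * B = A * Q := by
    have hcc : W.leadingCoeff * (W.leadingCoeff⁻¹ * Q.leadingCoeff) = Q.leadingCoeff := by
      field_simp
    calc W * B = C W.leadingCoeff * (A * G) * (C (W.leadingCoeff⁻¹ * Q.leadingCoeff) * rad) := by
          rw [← hWfacA, ← hB]
      _ = C (W.leadingCoeff * (W.leadingCoeff⁻¹ * Q.leadingCoeff)) * (A * (rad * G)) := by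
          simp only [C_mul]; ring
      _ = A * (C Q.leadingCoeff * (G * rad)) := by rw [hcc]; ring
      _ = A * Q := by rw [← hQfacQ]
  have hRF : algebraMap (Polynomial k) (RatFunc k) W /
        algebraMap (Polynomial k) (RatFunc k) (Q ^ 2)
      = algebraMap (Polynomial k) (RatFunc k) A /
        algebraMap (Polynomial k) (RatFunc k) (B * Q) := by
    rw [div_eq_div_iff (RatFunc.algebraMap_ne_zero (pow_ne_zero 2 hQ))
      (RatFunc.algebraMap_ne_zero (mul_ne_zero hB0 hQ)), ← map_mul, ← map_mul]
    congr 1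
    rw [← mul_assoc, hWB, sq]
    ring
  -- the enumeration of S
  set l : List k := S.toList with hlist
  have hl : (l : Multiset k) = S := S.coe_toList
  have hlen : l.length = n + r - 1 := by
    rw [← Multiset.coe_card, hl, hScard]
  set x : Fin (n + r - 1) → k := fun i => l.get (finCongr hlen.symm i) with hx
  have hfin : ∀ {M : Type _} [CommMonoid M] (f : k → M),
      (∏ i, f (x i)) = (S.map f).prod := by
    intro M _ f
    rw [← hl]
    have h1 : ((l : Multiset k).map f).prod = (l.map f).prod := by
      simp
    rw [h1]
    have h2 : (l.map f).prod = ∏ i : Fin l.length, f (l.get i) := by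
      conv_lhs => rw [← List.ofFn_get l]
      rw [List.map_ofFn, List.prod_ofFn]
      rfl
    rw [h2, hx]
    exact Fintype.prod_equiv (finCongr hlen.symm) _ _ fun i => rfl
  -- the constants
  set cP : k := (Q.roots.map fun t => P.eval t).prod with hcP
  have hcP0 : cP ≠ 0 := by
    rw [hcP]
    apply Multiset.prod_ne_zero
    intro h0
    obtain ⟨t, ht, h0⟩ := Multiset.mem_map.mp h0
    exact hnocommon t (mem_roots'.mp ht).2 h0
  set cT : k := (T.map fun t => P.eval t).prod with hcT
  have hcT0 : cT ≠ 0 := by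
    rw [hcT]
    apply Multiset.prod_ne_zero
    intro h0
    obtain ⟨t, ht, h0⟩ := Multiset.mem_map.mp h0
    exact hnocommon t (mem_roots'.mp (hTmem t ht)).2 h0
  set qS : k := (S.map fun t => Q.eval t).prod with hqS
  have hqS0 : qS ≠ 0 := by
    rw [hqS]
    apply Multiset.prod_ne_zero
    intro h0
    obtain ⟨t, ht, h0⟩ := Multiset.mem_map.mp h0
    exact hSQ t ht h0
  have hneg1 : ((-1 : k)) ≠ 0 := neg_ne_zero.mpr one_ne_zero
  set c : k := ((-1) ^ (n * (n + m - 1)) * (-1) ^ (n + r - 1)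
        * W.leadingCoeff ^ n * cT * qS * P.leadingCoeff ^ m)
      / (P.leadingCoeff ^ (n + m - 1) * ((-1) ^ (n * m) * Q.leadingCoeff ^ n * cP)) with hc
  have hc0 : c ≠ 0 := by
    rw [hc]
    exact div_ne_zero
      (mul_ne_zero (mul_ne_zero (mul_ne_zero (mul_ne_zero (mul_ne_zero
        (pow_ne_zero _ hneg1) (pow_ne_zero _ hneg1))
        (pow_ne_zero _ hlc)) hcT0) hqS0) (pow_ne_zero _ hpc))
      (mul_ne_zero (pow_ne_zero _ hpc)
        (mul_ne_zero (mul_ne_zero (pow_ne_zero _ hneg1) (pow_ne_zero _ hqc)) hcP0))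
  -- the discriminant identity
  have hdisc : ∀ z : k, ((P - C z * Q).roots.map
      (fun y => (derivative P - C z * derivative Q).eval y)).prod
      = c * ∏ i, (z - P.eval (x i) / Q.eval (x i)) := by
    intro z
    set F := P - C z * Q with hF
    have hFdeg : F.natDegree = n := by
      rw [hF]
      exact natDegree_sub_eq_left_of_natDegree_lt
        (lt_of_le_of_lt (natDegree_C_mul_le z Q) hdeg)
    have hF0 : F ≠ 0 := fun h => by
      rw [h, natDegree_zero] at hFdeg
      omega
    have hFlc : F.leadingCoeff = P.leadingCoeff := by
      rw [leadingCoeff, hFdeg, hF, coeff_sub, coeff_C_mul,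
        coeff_eq_zero_of_natDegree_lt (show Q.natDegree < n from hdeg)]
      rw [mul_zero, sub_zero]
      exact coeff_natDegree
    have hFder : derivative F = derivative P - C z * derivative Q := by
      rw [hF, derivative_sub, derivative_C_mul]
    have hWQ : ∀ y ∈ F.roots, (derivative F).eval y * Q.eval y = W.eval y := by
      intro y hy
      have hyF : F.eval y = 0 := (mem_roots'.mp hy).2
      have hid : W = derivative F * Q - F * derivative Q := by
        rw [hWdef, hFder, hF]; ring
      rw [hid, eval_sub, eval_mul, eval_mul, hyF]
      ring
    have hE3 : (F.roots.map fun y => (derivative F).eval y).prod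
        * (F.roots.map fun y => Q.eval y).prod
        = (F.roots.map fun y => W.eval y).prod := by
      rw [← Multiset.prod_map_mul]
      exact congrArg _ (Multiset.map_congr rfl fun y hy => hWQ y hy)
    have hE1 : (F.roots.map fun y => Q.eval y).prod * P.leadingCoeff ^ m
        = (-1) ^ (n * m) * Q.leadingCoeff ^ n * cP := by
      have h := aux_prod_eval F Q
      rw [hFdeg, hFlc, ← hm] at h
      rw [h, hcP]
      congr 1
      refine congrArg Multiset.prod (Multiset.map_congr rfl ?_)
      intro t ht
      have h0 : Q.eval t = 0 := (mem_roots'.mp ht).2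
      rw [hF]
      simp [h0]
    have hprodT : (T.map fun t => F.eval t).prod = cT := by
      rw [hcT]
      refine congrArg Multiset.prod (Multiset.map_congr rfl ?_)
      intro t ht
      have h0 : Q.eval t = 0 := (mem_roots'.mp (hTmem t ht)).2
      rw [hF]
      simp [h0]
    have hprodS : (S.map fun t => F.eval t).prod
        = (-1) ^ (n + r - 1) * qS * (S.map fun t => z - P.eval t / Q.eval t).prod := by
      have h1 : (S.map fun t => F.eval t)
          = S.map fun t => -(Q.eval t) * (z - P.eval t / Q.eval t) := by
        refine Multiset.map_congr rfl ?_
        intro t ht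
        have hQt := hSQ t ht
        rw [hF]
        field_simp
        rw [eval_sub, eval_mul, eval_C]
        ring
      have h3 : (S.map fun t => -(Q.eval t)) = (S.map fun t => Q.eval t).map Neg.neg := by
        rw [Multiset.map_map]; rfl
      rw [h1, Multiset.prod_map_mul, h3, Multiset.prod_map_neg, Multiset.card_map,
        hScard, hqS]
    have hE2 : (F.roots.map fun y => W.eval y).prod * P.leadingCoeff ^ (n + m - 1)
        = (-1) ^ (n * (n + m - 1)) * W.leadingCoeff ^ n
          * ((-1) ^ (n + r - 1) * qS * (S.map fun t => z - P.eval t / Q.eval t).prod * cT) := by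
      have h := aux_prod_eval F W
      rw [hFdeg, hFlc, hWdeg] at h
      rw [h]
      congr 1
      rw [← hST, Multiset.map_add, Multiset.prod_add, hprodS, hprodT]
    have hPQne : (F.roots.map fun y => Q.eval y).prod ≠ 0 := by
      intro h0
      rw [h0, zero_mul] at hE1
      exact (mul_ne_zero (mul_ne_zero (pow_ne_zero _ hneg1) (pow_ne_zero _ hqc)) hcP0)
        hE1.symm
    rw [← hFder, hfin fun t => z - P.eval t / Q.eval t]
    have hL : (F.roots.map fun y => (derivative F).eval y).prod
        = (F.roots.map fun y => W.eval y).prod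
          / (F.roots.map fun y => Q.eval y).prod :=
      (eq_div_iff hPQne).mpr hE3
    have hPQv : (F.roots.map fun y => Q.eval y).prod
        = ((-1) ^ (n * m) * Q.leadingCoeff ^ n * cP) / P.leadingCoeff ^ m :=
      (eq_div_iff (pow_ne_zero _ hpc)).mpr hE1
    have hPWv : (F.roots.map fun y => W.eval y).prod
        = ((-1) ^ (n * (n + m - 1)) * W.leadingCoeff ^ n
            * ((-1) ^ (n + r - 1) * qS * (S.map fun t => z - P.eval t / Q.eval t).prod * cT))
          / P.leadingCoeff ^ (n + m - 1) :=
      (eq_div_iff (pow_ne_zero _ hpc)).mpr hE2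
    rw [hL, hPWv, hPQv, hc]
    have hd1 : ((-1 : k)) ^ (n * m) * Q.leadingCoeff ^ n * cP ≠ 0 :=
      mul_ne_zero (mul_ne_zero (pow_ne_zero _ hneg1) (pow_ne_zero _ hqc)) hcP0
    field_simp
  refine ⟨A, B, x, c, hc0, hB0, hAQcop, ?_, hRF, hdisc, ?_⟩
  · rw [hA, ← hfin fun t => X - C t]
  · rw [natDegree_C_mul hc0,
      natDegree_prod _ _ (fun i _ => X_sub_C_ne_zero (P.eval (x i) / Q.eval (x i)))]
    simp [natDegree_X_sub_C]
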